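/- (Baillon–Haddad) Let f : ℝⁿ → ℝ be convex and differentiable with L-Lipschitz continuous gradient (L > 0). Then ∇f is (1/L)-inverse strongly monotone: ⟨∇f(x) − ∇f(y), x − y⟩ ≥ (1/L)‖∇f(x) − ∇f(y)‖² for all x, y ∈ ℝⁿ. -/

import Mathlib

open RealInnerProductSpace

section BHaux

variable {F : Type*} [NormedAddCommGroup F] [InnerProductSpace ℝ F] [CompleteSpace F]

private lemma bh_line_hasDerivAt (x y : F) (t : ℝ) :
    HasDerivAt (fun t : ℝ => x + t • (y - x)) (y - x) t := by
  simpa using ((hasDerivAt_id t).smul_const (y - x)).const_add x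

private lemma bh_g_hasDerivAt {f : F → ℝ} {f' : F → F}
    (hdiff : ∀ x, HasGradientAt f (f' x) x) (x y : F) (t : ℝ) :
    HasDerivAt (fun t : ℝ => f (x + t • (y - x))) ⟪f' (x + t • (y - x)), y - x⟫ t := by
  have h2 := (hdiff (x + t • (y - x))).hasFDerivAt.comp_hasDerivAt t (bh_line_hasDerivAt x y t)
  simpa [InnerProductSpace.toDual_apply_apply, Function.comp_def] using h2

private lemma bh_g_convex {f : F → ℝ} (hconv : ConvexOn ℝ Set.univ f) (x y : F) :
    ConvexOn ℝ Set.univ (fun t : ℝ => f (x + t • (y - x))) := by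
  have h := hconv.comp_affineMap (AffineMap.lineMap x y : ℝ →ᵃ[ℝ] F)
  have he : (f ∘ (AffineMap.lineMap x y : ℝ →ᵃ[ℝ] F)) = fun t : ℝ => f (x + t • (y - x)) := by
    funext t
    simp [AffineMap.lineMap_apply, add_comm]
  simpa [he] using h

/-- Subgradient inequality for convex differentiable functions. -/
private lemma bh_subgrad {f : F → ℝ} {f' : F → F}
    (hconv : ConvexOn ℝ Set.univ f) (hdiff : ∀ x, HasGradientAt f (f' x) x)
    (x y : F) : f x + ⟪f' x, y - x⟫ ≤ f y := by
  have h := (bh_g_convex hconv x y).le_slope_of_hasDerivAt (Set.mem_univ (0:ℝ))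
    (Set.mem_univ (1:ℝ)) one_pos (bh_g_hasDerivAt hdiff x y 0)
  rw [slope_def_field] at h
  simp at h
  linarith

/-- Descent lemma. -/
private lemma bh_descent {f : F → ℝ} {f' : F → F} {L : ℝ} (hL : 0 < L)
    (hdiff : ∀ x, HasGradientAt f (f' x) x)
    (hlip : ∀ x y, ‖f' x - f' y‖ ≤ L * ‖x - y‖)
    (x y : F) : f y ≤ f x + ⟪f' x, y - x⟫ + L / 2 * ‖y - x‖ ^ 2 := by
  set ψ : ℝ → ℝ := fun t =>
    f (x + t • (y - x)) - t * ⟪f' x, y - x⟫ - L / 2 * t ^ 2 * ‖y - x‖ ^ 2 with hψdef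
  have hψ' : ∀ t : ℝ, HasDerivAt ψ
      (⟪f' (x + t • (y - x)), y - x⟫ - ⟪f' x, y - x⟫ - L * t * ‖y - x‖ ^ 2) t := by
    intro t
    have h1 := bh_g_hasDerivAt hdiff x y t
    have h2 : HasDerivAt (fun t : ℝ => t * ⟪f' x, y - x⟫) ⟪f' x, y - x⟫ t := by
      simpa using (hasDerivAt_id t).mul_const ⟪f' x, y - x⟫
    have h3 : HasDerivAt (fun t : ℝ => L / 2 * t ^ 2 * ‖y - x‖ ^ 2)
        (L * t * ‖y - x‖ ^ 2) t := by
      have := ((hasDerivAt_pow 2 t).const_mul (L / 2)).mul_const (‖y - x‖ ^ 2)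
      convert this using 1
      exacts [rfl, rfl, by ring]
    exact (h1.sub h2).sub h3
  have hanti : AntitoneOn ψ (Set.Icc (0:ℝ) 1) := by
    apply antitoneOn_of_deriv_nonpos (convex_Icc 0 1)
    · exact (fun t _ => ((hψ' t).differentiableAt).continuousAt.continuousWithinAt)
    · exact fun t ht => ((hψ' t).differentiableAt).differentiableWithinAt
    · intro t ht
      rw [interior_Icc] at ht
      rw [(hψ' t).deriv]
      have hb : ⟪f' (x + t • (y - x)) - f' x, y - x⟫ ≤ L * t * ‖y - x‖ ^ 2 := by
        calc ⟪f' (x + t • (y - x)) - f' x, y - x⟫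
            ≤ ‖f' (x + t • (y - x)) - f' x‖ * ‖y - x‖ := real_inner_le_norm _ _
          _ ≤ (L * ‖(x + t • (y - x)) - x‖) * ‖y - x‖ := by
              gcongr; exact hlip _ _
          _ = L * t * ‖y - x‖ ^ 2 := by
              rw [add_sub_cancel_left, norm_smul, Real.norm_eq_abs,
                abs_of_pos ht.1]
              ring
      rw [inner_sub_left] at hb
      linarith
  have h01 := hanti (Set.mem_Icc.mpr ⟨le_refl 0, zero_le_one⟩)
    (Set.mem_Icc.mpr ⟨zero_le_one, le_refl 1⟩) zero_le_one
  simp only [hψdef, zero_smul, add_zero, one_smul, add_sub_cancel] at h01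
  simp at h01
  linarith

/-- Key inequality: cocoercivity-type lower bound on `f`. -/
private lemma bh_key {f : F → ℝ} {f' : F → F} {L : ℝ} (hL : 0 < L)
    (hconv : ConvexOn ℝ Set.univ f) (hdiff : ∀ x, HasGradientAt f (f' x) x)
    (hlip : ∀ x y, ‖f' x - f' y‖ ≤ L * ‖x - y‖)
    (x y : F) : f x + ⟪f' x, y - x⟫ + 1 / (2 * L) * ‖f' x - f' y‖ ^ 2 ≤ f y := by
  set z := y - (1 / L) • (f' y - f' x) with hz
  have h1 := bh_subgrad hconv hdiff x z
  have h2 := bh_descent hL hdiff hlip y z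
  have hzy : z - y = -((1 / L) • (f' y - f' x)) := by rw [hz]; abel
  have e1 : ⟪f' y, z - y⟫ = -(1 / L) * ⟪f' y, f' y - f' x⟫ := by
    rw [hzy, inner_neg_right, real_inner_smul_right]; ring
  have e2 : ‖z - y‖ ^ 2 = (1 / L) ^ 2 * ‖f' y - f' x‖ ^ 2 := by
    rw [hzy, norm_neg, norm_smul, mul_pow, Real.norm_eq_abs, sq_abs]
  have e3 : ⟪f' x, z - x⟫ = ⟪f' x, y - x⟫ - (1 / L) * ⟪f' x, f' y - f' x⟫ := by
    have : z - x = (y - x) - (1 / L) • (f' y - f' x) := by rw [hz]; abel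
    rw [this, inner_sub_right, real_inner_smul_right]
  have e4 : ⟪f' y, f' y - f' x⟫ - ⟪f' x, f' y - f' x⟫ = ‖f' x - f' y‖ ^ 2 := by
    rw [← inner_sub_left, norm_sub_rev (f' x), real_inner_self_eq_norm_sq]
  have e5 : ‖f' y - f' x‖ ^ 2 = ‖f' x - f' y‖ ^ 2 := by rw [norm_sub_rev]
  rw [e1, e2, e5] at h2
  rw [e3] at h1
  have hL' : L ≠ 0 := ne_of_gt hL
  have hthis : 1 / L * ⟪f' y, f' y - f' x⟫ - 1 / L * ⟪f' x, f' y - f' x⟫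
      = 1 / L * ‖f' x - f' y‖ ^ 2 := by rw [← mul_sub, e4]
  have harith : L / 2 * ((1 / L) ^ 2 * ‖f' x - f' y‖ ^ 2)
      = 1 / (2 * L) * ‖f' x - f' y‖ ^ 2 := by
    field_simp
  rw [harith] at h2
  have hhalf : 1 / L * ‖f' x - f' y‖ ^ 2
      = 1 / (2 * L) * ‖f' x - f' y‖ ^ 2 + 1 / (2 * L) * ‖f' x - f' y‖ ^ 2 := by
    rw [← two_mul, ← mul_assoc]
    congr 1
    field_simp
  linarith [hthis, hhalf]

end BHaux

/-- Baillon–Haddad: if `f : ℝⁿ → ℝ` is convex and differentiable with an `L`-Lipschitz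
gradient (`L > 0`), then `∇f` is `1/L`-inverse strongly monotone. -/
theorem baillon_haddad {d : ℕ}
    (f : EuclideanSpace ℝ (Fin d) → ℝ)
    (f' : EuclideanSpace ℝ (Fin d) → EuclideanSpace ℝ (Fin d))
    (L : ℝ) (hL : 0 < L)
    (hconv : ConvexOn ℝ Set.univ f)
    (hdiff : ∀ x, HasGradientAt f (f' x) x)
    (hlip : ∀ x y, ‖f' x - f' y‖ ≤ L * ‖x - y‖) :
    ∀ x y, (1 / L) * ‖f' x - f' y‖ ^ 2 ≤ ⟪f' x - f' y, x - y⟫ := by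
  intro x y
  have h1 := bh_key hL hconv hdiff hlip x y
  have h2 := bh_key hL hconv hdiff hlip y x
  have e5 : ‖f' y - f' x‖ ^ 2 = ‖f' x - f' y‖ ^ 2 := by rw [norm_sub_rev]
  rw [e5] at h2
  have einner : ⟪f' x - f' y, x - y⟫ = - ⟪f' x, y - x⟫ - ⟪f' y, x - y⟫ := by
    rw [inner_sub_left]
    have a1 : ⟪f' x, x - y⟫ = - ⟪f' x, y - x⟫ := by
      rw [← inner_neg_right]; congr 1; abel
    rw [a1]
  have hL' : (0:ℝ) < 2 * L := by linarith
  rw [einner]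
  have key : 2 * (1 / (2 * L)) * ‖f' x - f' y‖ ^ 2 ≤ - ⟪f' x, y - x⟫ - ⟪f' y, x - y⟫ := by
    linarith
  have h2L : 2 * (1 / (2 * L)) = 1 / L := by field_simp
  rw [← h2L]
  exact key
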